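/- Fix Φ₁, Φ₂, Φ₃ ∈ [0, π/2]. For r₁, r₂, r₃ > 0 define ℓ₁ = arcosh(cosh r₂ cosh r₃ + sinh r₂ sinh r₃ cos Φ₁), ℓ₂ = arcosh(cosh r₃ cosh r₁ + sinh r₃ sinh r₁ cos Φ₂), ℓ₃ = arcosh(cosh r₁ cosh r₂ + sinh r₁ sinh r₂ cos Φ₃), and θ₁ = arccos((cosh ℓ₂ cosh ℓ₃ − cosh ℓ₁)/(sinh ℓ₂ sinh ℓ₃)), with θ₂, θ₃ defined by cyclic permutation of the indices. Then θ₁ + θ₂ + θ₃ tends to π as (r₁, r₂, r₃) tends to (0, 0, 0) within the positive octant. -/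

import Mathlib

set_option maxHeartbeats 1000000

open Real

/-- The inverse hyperbolic cosine (on `[1, ∞)`). -/
noncomputable def arcosh' (x : ℝ) : ℝ := Real.log (x + Real.sqrt (x ^ 2 - 1))

section Helpers

lemma sinh_le_mul_cosh {x : ℝ} (hx : 0 ≤ x) : Real.sinh x ≤ x * Real.cosh x := by
  have mono : MonotoneOn (fun y => y * Real.cosh y - Real.sinh y) (Set.Ici (0:ℝ)) := by
    apply monotoneOn_of_deriv_nonneg (convex_Ici 0)
    · exact ((continuous_id.mul Real.continuous_cosh).sub Real.continuous_sinh).continuousOn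
    · intro y _
      exact ((differentiableAt_id.mul (Real.differentiable_cosh y)).sub
        (Real.differentiable_sinh y)).differentiableWithinAt
    · intro y hy
      rw [interior_Ici, Set.mem_Ioi] at hy
      have hd : HasDerivAt (fun y => y * Real.cosh y - Real.sinh y)
          (1 * Real.cosh y + y * Real.sinh y - Real.cosh y) y :=
        ((hasDerivAt_id y).mul (Real.hasDerivAt_cosh y)).sub (Real.hasDerivAt_sinh y)
      rw [hd.deriv]
      have h1 : 0 < Real.sinh y := Real.sinh_pos_iff.2 hy
      nlinarith
  have h := mono Set.self_mem_Ici hx hx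
  simp only [Real.cosh_zero, Real.sinh_zero, mul_zero, zero_mul, sub_zero] at h
  linarith

lemma cosh_one_le_two : Real.cosh 1 ≤ 2 := by
  rw [Real.cosh_eq]
  have h1 := Real.exp_one_lt_d9
  have h2 : Real.exp (-1) ≤ 1 := by
    rw [show (1:ℝ) = Real.exp 0 by rw [Real.exp_zero]]
    exact Real.exp_le_exp.2 (by norm_num)
  linarith

lemma cosh_arcosh {x : ℝ} (hx : 1 ≤ x) : Real.cosh (arcosh' x) = x := by
  rw [arcosh']
  have h0 : (0:ℝ) ≤ x ^ 2 - 1 := by nlinarith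
  have hs : Real.sqrt (x ^ 2 - 1) ^ 2 = x ^ 2 - 1 := Real.sq_sqrt h0
  have hsn : 0 ≤ Real.sqrt (x ^ 2 - 1) := Real.sqrt_nonneg _
  have hy : 0 < x + Real.sqrt (x ^ 2 - 1) := by linarith
  have hmul : (x + Real.sqrt (x ^ 2 - 1)) * (x - Real.sqrt (x ^ 2 - 1)) = 1 := by nlinarith
  rw [Real.cosh_eq, Real.exp_log hy, Real.exp_neg, Real.exp_log hy,
    inv_eq_of_mul_eq_one_right hmul]
  ring

lemma arcosh_nonneg {x : ℝ} (hx : 1 ≤ x) : 0 ≤ arcosh' x := by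
  rw [arcosh']
  exact Real.log_nonneg (by linarith [Real.sqrt_nonneg (x ^ 2 - 1)])

lemma arccos_sq_diff {a b : ℝ} (ha : -1 ≤ a) (ha' : a ≤ 1) (hb : -1 ≤ b) (hb' : b ≤ 1) :
    (Real.arccos a - Real.arccos b) ^ 2 ≤ π ^ 2 / 2 * |a - b| := by
  have key : ∀ s u : ℝ, -1 ≤ s → s ≤ 1 → -1 ≤ u → u ≤ 1 → s ≤ u →
      (Real.arccos s - Real.arccos u) ^ 2 ≤ π ^ 2 / 2 * (u - s) := by
    intro s u hs hs' hu hu' hsu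
    set A := Real.arccos s with hA
    set B := Real.arccos u with hB
    have hA0 : 0 ≤ A := Real.arccos_nonneg s
    have hAπ : A ≤ π := Real.arccos_le_pi s
    have hB0 : 0 ≤ B := Real.arccos_nonneg u
    have hBA : B ≤ A := by
      rw [hA, hB, Real.arccos_eq_pi_div_two_sub_arcsin, Real.arccos_eq_pi_div_two_sub_arcsin]
      have := Real.monotone_arcsin hsu
      linarith
    have hcosA : Real.cos A = s := Real.cos_arccos hs hs'
    have hcosB : Real.cos B = u := Real.cos_arccos hu hu'
    have hsinA : Real.sin A = Real.sqrt (1 - s ^ 2) := Real.sin_arccos s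
    have hsinB : Real.sin B = Real.sqrt (1 - u ^ 2) := Real.sin_arccos u
    -- step 1 : 1 - cos (A - B) ≤ u - s
    have hprod : (1 + s) * (1 - u) ≤ Real.sin A * Real.sin B := by
      rw [hsinA, hsinB, ← Real.sqrt_mul (by nlinarith)]
      have hfac : 0 ≤ (1 + s) * (1 - u) * (u - s) :=
        mul_nonneg (mul_nonneg (by linarith) (by linarith)) (by linarith)
      have h1 : ((1 + s) * (1 - u)) ^ 2 ≤ (1 - s ^ 2) * (1 - u ^ 2) := by nlinarith [hfac]
      calc (1 + s) * (1 - u) = Real.sqrt (((1 + s) * (1 - u)) ^ 2) := by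
            rw [Real.sqrt_sq (by nlinarith)]
        _ ≤ Real.sqrt ((1 - s ^ 2) * (1 - u ^ 2)) := Real.sqrt_le_sqrt h1
    have hstep1 : 1 - Real.cos (A - B) ≤ u - s := by
      rw [Real.cos_sub, hcosA, hcosB]
      nlinarith [hprod]
    -- step 2 : 2/π² (A-B)² ≤ 1 - cos (A-B)
    have hd0 : 0 ≤ A - B := by linarith
    have hdπ : A - B ≤ π := by linarith
    have hhalf : 2 / π * ((A - B) / 2) ≤ Real.sin ((A - B) / 2) :=
      Real.mul_le_sin (by linarith) (by linarith)
    have hπ : 0 < π := Real.pi_pos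
    have hcosd : Real.cos (A - B) = 1 - 2 * Real.sin ((A - B) / 2) ^ 2 := by
      have h2 : Real.cos (2 * ((A - B) / 2)) = 2 * Real.cos ((A - B) / 2) ^ 2 - 1 :=
        Real.cos_two_mul _
      have h3 := Real.sin_sq_add_cos_sq ((A - B) / 2)
      rw [show (2 : ℝ) * ((A - B) / 2) = A - B by ring] at h2
      linarith
    have h5 : (A - B) / π ≤ Real.sin ((A - B) / 2) := by
      have : 2 / π * ((A - B) / 2) = (A - B) / π := by field_simp
      linarith [hhalf, this.symm.le, this.le]
    have h6 : 0 ≤ (A - B) / π := by positivity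
    have hsq : ((A - B) / π) ^ 2 ≤ Real.sin ((A - B) / 2) ^ 2 := by
      have := pow_le_pow_left₀ h6 h5 2
      exact this
    have hstep2 : 2 / π ^ 2 * (A - B) ^ 2 ≤ 1 - Real.cos (A - B) := by
      rw [hcosd]
      have : 2 / π ^ 2 * (A - B) ^ 2 = 2 * ((A - B) / π) ^ 2 := by
        rw [div_pow]; ring
      rw [this]
      linarith [hsq]
    calc (A - B) ^ 2 = π ^ 2 / 2 * (2 / π ^ 2 * (A - B) ^ 2) := by
          field_simp
      _ ≤ π ^ 2 / 2 * (1 - Real.cos (A - B)) :=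
          mul_le_mul_of_nonneg_left hstep2 (by positivity)
      _ ≤ π ^ 2 / 2 * (u - s) := mul_le_mul_of_nonneg_left hstep1 (by positivity)
  rcases le_total a b with h | h
  · have := key a b ha ha' hb hb' h
    rwa [abs_of_nonpos (by linarith), neg_sub]
  · have := key b a hb hb' ha ha' h
    rw [abs_of_nonneg (by linarith), show Real.arccos a - Real.arccos b =
      -(Real.arccos b - Real.arccos a) by ring, neg_sq]
    linarith [this]

lemma arccos_antitone {s t : ℝ} (h : s ≤ t) : Real.arccos t ≤ Real.arccos s := by
  rw [Real.arccos_eq_pi_div_two_sub_arcsin, Real.arccos_eq_pi_div_two_sub_arcsin]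
  linarith [Real.monotone_arcsin h]

lemma euclid_angle_sum {a b c : ℝ} (ha : 0 < a) (hb : 0 < b) (hc : 0 < c)
    (h1 : a < b + c) (h2 : b < a + c) (h3 : c < a + b) :
    Real.arccos ((b^2 + c^2 - a^2) / (2*b*c)) + Real.arccos ((c^2 + a^2 - b^2) / (2*c*a))
      + Real.arccos ((a^2 + b^2 - c^2) / (2*a*b)) = π := by
  set x := (b^2 + c^2 - a^2) / (2*b*c) with hxdef
  set y := (c^2 + a^2 - b^2) / (2*c*a) with hydef
  set z := (a^2 + b^2 - c^2) / (2*a*b) with hzdef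
  have hbc : 0 < 2*b*c := by positivity
  have hca : 0 < 2*c*a := by positivity
  have hab : 0 < 2*a*b := by positivity
  have hx1 : -1 ≤ x := by rw [hxdef, le_div_iff₀ hbc]; nlinarith
  have hx2 : x ≤ 1 := by rw [hxdef, div_le_iff₀ hbc]; nlinarith
  have hy1 : -1 ≤ y := by rw [hydef, le_div_iff₀ hca]; nlinarith
  have hy2 : y ≤ 1 := by rw [hydef, div_le_iff₀ hca]; nlinarith
  have hz1 : -1 ≤ z := by rw [hzdef, le_div_iff₀ hab]; nlinarith
  have hz2 : z ≤ 1 := by rw [hzdef, div_le_iff₀ hab]; nlinarith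
  have hxy : -y ≤ x := by
    have hsum : 0 ≤ x + y := by
      rw [hxdef, hydef, div_add_div _ _ hbc.ne' hca.ne', le_div_iff₀ (by positivity)]
      nlinarith [mul_pos (mul_pos hc (add_pos ha hb)) (mul_pos
        (show 0 < c + b - a by linarith) (show 0 < c + a - b by linarith))]
    linarith
  have hAB : Real.arccos x + Real.arccos y ≤ π := by
    have h := arccos_antitone hxy
    rw [Real.arccos_neg] at h
    linarith
  set Q := (a+b+c) * (-a+b+c) * (a-b+c) * (a+b-c) with hQdef
  have hQ : 0 < Q := by
    have q1 : 0 < a+b+c := by linarith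
    have q2 : 0 < -a+b+c := by linarith
    have q3 : 0 < a-b+c := by linarith
    have q4 : 0 < a+b-c := by linarith
    exact mul_pos (mul_pos (mul_pos q1 q2) q3) q4
  have hsq : (1 - x^2) * (1 - y^2) = (Q / (4*a*b*c^2))^2 := by
    rw [hxdef, hydef, hQdef]; field_simp; ring
  have hsin : Real.sqrt (1-x^2) * Real.sqrt (1-y^2) = Q / (4*a*b*c^2) := by
    rw [← Real.sqrt_mul (by nlinarith : (0:ℝ) ≤ 1 - x^2), hsq,
      Real.sqrt_sq (by positivity)]
  have hcos : Real.cos (Real.arccos x + Real.arccos y) = Real.cos (π - Real.arccos z) := by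
    rw [Real.cos_add, Real.cos_arccos hx1 hx2, Real.cos_arccos hy1 hy2,
      Real.sin_arccos, Real.sin_arccos, Real.cos_pi_sub, Real.cos_arccos hz1 hz2, hsin]
    rw [hxdef, hydef, hzdef, hQdef]
    field_simp
    ring
  have hmem1 : Real.arccos x + Real.arccos y ∈ Set.Icc 0 π :=
    ⟨by linarith [Real.arccos_nonneg x, Real.arccos_nonneg y], hAB⟩
  have hmem2 : π - Real.arccos z ∈ Set.Icc 0 π :=
    ⟨by linarith [Real.arccos_le_pi z], by linarith [Real.arccos_nonneg z]⟩
  have := Real.injOn_cos hmem1 hmem2 hcos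
  linarith

lemma angle_compare {u v w t : ℝ} (hu : 0 < u) (hv : 0 < v) (hw : 0 < w)
    (t1 : u < v + w) (t2 : v < u + w) (t3 : w < u + v)
    (hut : u ≤ 2*t) (hvt : v ≤ 2*t) (hwt : w ≤ 2*t) (ht : t ≤ 1/2) :
    |(Real.cosh u * Real.cosh v - Real.cosh w) / (Real.sinh u * Real.sinh v)
      - (u^2 + v^2 - w^2) / (2*u*v)| ≤ 32 * t^2 ∧
    (Real.cosh u * Real.cosh v - Real.cosh w) / (Real.sinh u * Real.sinh v) ∈ Set.Icc (-1:ℝ) 1 ∧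
    (u^2 + v^2 - w^2) / (2*u*v) ∈ Set.Icc (-1:ℝ) 1 := by
  have ht0 : 0 < t := by linarith
  set P : ℝ := (w + u - v)/2 with hPdef
  set Q : ℝ := (w + v - u)/2 with hQdef
  set R : ℝ := (u + v - w)/2 with hRdef
  set S : ℝ := (u + v + w)/2 with hSdef
  have hP : 0 < P := by rw [hPdef]; linarith
  have hQ : 0 < Q := by rw [hQdef]; linarith
  have hR : 0 < R := by rw [hRdef]; linarith
  have hS : 0 < S := by rw [hSdef]; linarith
  have hsu : 0 < Real.sinh u := Real.sinh_pos_iff.2 hu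
  have hsv : 0 < Real.sinh v := Real.sinh_pos_iff.2 hv
  have hsP : 0 < Real.sinh P := Real.sinh_pos_iff.2 hP
  have hsQ : 0 < Real.sinh Q := Real.sinh_pos_iff.2 hQ
  have hsR : 0 ≤ Real.sinh R := (Real.sinh_pos_iff.2 hR).le
  have hsS : 0 ≤ Real.sinh S := (Real.sinh_pos_iff.2 hS).le
  have hD : 0 < Real.sinh u * Real.sinh v := mul_pos hsu hsv
  have huv : 0 < u * v := mul_pos hu hv
  -- hyperbolic identities
  have idA : Real.sinh u * Real.sinh v - (Real.cosh u * Real.cosh v - Real.cosh w)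
      = 2 * Real.sinh P * Real.sinh Q := by
    have e1 : Real.cosh w = Real.cosh P * Real.cosh Q + Real.sinh P * Real.sinh Q := by
      rw [← Real.cosh_add]; congr 1; rw [hPdef, hQdef]; ring
    have e2 : Real.cosh u * Real.cosh v - Real.sinh u * Real.sinh v
        = Real.cosh P * Real.cosh Q - Real.sinh P * Real.sinh Q := by
      rw [← Real.cosh_sub, ← Real.cosh_sub]; congr 1; rw [hPdef, hQdef]; ring
    linarith
  have idB : Real.sinh u * Real.sinh v + (Real.cosh u * Real.cosh v - Real.cosh w)
      = 2 * Real.sinh S * Real.sinh R := by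
    have e1 : Real.cosh u * Real.cosh v + Real.sinh u * Real.sinh v
        = Real.cosh S * Real.cosh R + Real.sinh S * Real.sinh R := by
      rw [← Real.cosh_add, ← Real.cosh_add]; congr 1; rw [hSdef, hRdef]; ring
    have e2 : Real.cosh w = Real.cosh S * Real.cosh R - Real.sinh S * Real.sinh R := by
      rw [← Real.cosh_sub]; congr 1; rw [hSdef, hRdef]; ring
    linarith
  set K : ℝ := Real.cosh (2*t) with hKdef
  have hK1 : 1 ≤ K := Real.one_le_cosh _
  -- bounds sinh x ≤ x * K for x ∈ {P, Q, u, v}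
  have hcosh_le : ∀ x : ℝ, 0 < x → x ≤ 2*t → Real.sinh x ≤ x * K := by
    intro x hx hx2
    refine (sinh_le_mul_cosh hx.le).trans ?_
    have : Real.cosh x ≤ K := by
      rw [hKdef]
      exact Real.cosh_le_cosh.2 (by rw [abs_of_pos hx, abs_of_pos (by linarith : (0:ℝ) < 2*t)]; linarith)
    exact mul_le_mul_of_nonneg_left this hx.le
  have hshP : Real.sinh P ≤ P * K := hcosh_le P hP (by rw [hPdef]; linarith)
  have hshQ : Real.sinh Q ≤ Q * K := hcosh_le Q hQ (by rw [hQdef]; linarith)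
  have hshu : Real.sinh u ≤ u * K := hcosh_le u hu hut
  have hshv : Real.sinh v ≤ v * K := hcosh_le v hv hvt
  have hPle : P ≤ Real.sinh P := Real.self_le_sinh_iff.2 hP.le
  have hQle : Q ≤ Real.sinh Q := Real.self_le_sinh_iff.2 hQ.le
  have hule : u ≤ Real.sinh u := Real.self_le_sinh_iff.2 hu.le
  have hvle : v ≤ Real.sinh v := Real.self_le_sinh_iff.2 hv.le
  -- K^2 - 1 ≤ 16 t^2
  have hKt : K^2 - 1 ≤ 16 * t^2 := by
    have h1 : K^2 - 1 = Real.sinh (2*t)^2 := by rw [hKdef, Real.cosh_sq]; ring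
    have h2 : Real.sinh (2*t) ≤ 2*t * Real.cosh (2*t) := sinh_le_mul_cosh (by linarith)
    have h3 : Real.cosh (2*t) ≤ Real.cosh 1 :=
      Real.cosh_le_cosh.2 (by rw [abs_of_pos (by linarith : (0:ℝ) < 2*t), abs_one]; linarith)
    have h3b : Real.cosh (2*t) ≤ 2 := h3.trans cosh_one_le_two
    have h4 : Real.sinh (2*t) ≤ 4*t := by
      have := mul_le_mul_of_nonneg_left h3b (by linarith : (0:ℝ) ≤ 2*t)
      linarith
    have h5 : 0 ≤ Real.sinh (2*t) := (Real.sinh_pos_iff.2 (by linarith)).le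
    rw [h1]
    have h6 := pow_le_pow_left₀ h5 h4 2
    have h7 : (4*t)^2 = 16*t^2 := by ring
    linarith
  -- product inequalities
  have hup : 2 * Real.sinh P * Real.sinh Q * (u*v)
      ≤ K^2 * (2*P*Q) * (Real.sinh u * Real.sinh v) := by
    have m1 : Real.sinh P * Real.sinh Q ≤ (P*K)*(Q*K) :=
      mul_le_mul hshP hshQ hsQ.le (by positivity)
    have m2 : u * v ≤ Real.sinh u * Real.sinh v := mul_le_mul hule hvle hv.le hsu.le
    have m3 := mul_le_mul m1 m2 huv.le (by positivity)
    calc 2 * Real.sinh P * Real.sinh Q * (u*v)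
        = 2 * (Real.sinh P * Real.sinh Q * (u*v)) := by ring
      _ ≤ 2 * ((P*K)*(Q*K) * (Real.sinh u * Real.sinh v)) := by linarith [m3]
      _ = K^2 * (2*P*Q) * (Real.sinh u * Real.sinh v) := by ring
  have hdn : 2*P*Q * (Real.sinh u * Real.sinh v)
      ≤ K^2 * (2 * Real.sinh P * Real.sinh Q) * (u*v) := by
    have m1 : Real.sinh u * Real.sinh v ≤ (u*K)*(v*K) :=
      mul_le_mul hshu hshv hsv.le (by positivity)
    have m2 : P * Q ≤ Real.sinh P * Real.sinh Q := mul_le_mul hPle hQle hQ.le hsP.le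
    have m3 := mul_le_mul m2 m1 (by positivity) (by positivity)
    calc 2*P*Q * (Real.sinh u * Real.sinh v)
        = 2 * (P * Q * (Real.sinh u * Real.sinh v)) := by ring
      _ ≤ 2 * (Real.sinh P * Real.sinh Q * ((u*K)*(v*K))) := by linarith [m3]
      _ = K^2 * (2 * Real.sinh P * Real.sinh Q) * (u*v) := by ring
  -- express 1 ∓ cosines
  have hαval : 1 - (Real.cosh u * Real.cosh v - Real.cosh w) / (Real.sinh u * Real.sinh v)
      = 2 * Real.sinh P * Real.sinh Q / (Real.sinh u * Real.sinh v) := by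
    rw [one_sub_div hD.ne', idA]
  have hγval : 1 + (Real.cosh u * Real.cosh v - Real.cosh w) / (Real.sinh u * Real.sinh v)
      = 2 * Real.sinh S * Real.sinh R / (Real.sinh u * Real.sinh v) := by
    field_simp
    linarith [idB]
  have hβval : 1 - (u^2 + v^2 - w^2) / (2*u*v) = 2*P*Q / (u*v) := by
    rw [one_sub_div (by positivity : (2*u*v) ≠ 0)]
    rw [hPdef, hQdef]
    field_simp
    ring
  -- cosine range facts
  have hg_mem : (Real.cosh u * Real.cosh v - Real.cosh w) / (Real.sinh u * Real.sinh v)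
      ∈ Set.Icc (-1:ℝ) 1 := by
    constructor
    · have : 0 ≤ 2 * Real.sinh S * Real.sinh R / (Real.sinh u * Real.sinh v) := by positivity
      linarith [hγval]
    · have : 0 ≤ 2 * Real.sinh P * Real.sinh Q / (Real.sinh u * Real.sinh v) := by positivity
      linarith [hαval]
  have hg2_mem : (u^2 + v^2 - w^2) / (2*u*v) ∈ Set.Icc (-1:ℝ) 1 := by
    constructor
    · rw [le_div_iff₀ (by positivity : (0:ℝ) < 2*u*v)]
      have e1 : w^2 ≤ (u+v)^2 := pow_le_pow_left₀ hw.le t3.le 2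
      have e2 : (u+v)^2 = u^2 + 2*(u*v) + v^2 := by ring
      linarith
    · have : 0 ≤ 2*P*Q/(u*v) := by positivity
      linarith [hβval]
  refine ⟨?_, hg_mem, hg2_mem⟩
  -- ratio inequalities for α = 1-g, β = 1-ĝ
  set α : ℝ := 2 * Real.sinh P * Real.sinh Q / (Real.sinh u * Real.sinh v) with hαdef
  set β : ℝ := 2*P*Q / (u*v) with hβdef
  have hα0 : 0 ≤ α := by rw [hαdef]; positivity
  have hβ0 : 0 ≤ β := by rw [hβdef]; positivity
  have hβ2 : β ≤ 2 := by
    have := hg2_mem.1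
    linarith [hβval]
  have hαβ : α ≤ K^2 * β := by
    rw [hαdef, hβdef, div_le_iff₀ hD,
      show K^2 * (2*P*Q / (u*v)) * (Real.sinh u * Real.sinh v)
        = (K^2 * (2*P*Q) * (Real.sinh u * Real.sinh v)) / (u*v) by ring,
      le_div_iff₀ huv]
    linarith [hup]
  have hβα : β ≤ K^2 * α := by
    rw [hαdef, hβdef, div_le_iff₀ huv,
      show K^2 * (2 * Real.sinh P * Real.sinh Q / (Real.sinh u * Real.sinh v)) * (u*v)
        = (K^2 * (2 * Real.sinh P * Real.sinh Q) * (u*v)) / (Real.sinh u * Real.sinh v) by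
          ring,
      le_div_iff₀ hD]
    linarith [hdn]
  -- conclude
  have abstract : ∀ a b k s : ℝ, 0 ≤ a → 0 ≤ b → b ≤ 2 → 1 ≤ k → k - 1 ≤ 16*s →
      a ≤ k*b → b ≤ k*a → |a - b| ≤ 32*s := by
    intro a b k s ha hb hb2 hk hks hab hba
    have hs0 : 0 ≤ s := by linarith
    have p2 : 0 ≤ (k-1)*(2-b) :=
      mul_nonneg (by linarith) (by linarith)
    rw [abs_le]
    constructor
    · rcases le_total b a with h | h
      · linarith
      · have p1 : 0 ≤ (k-1)*(b-a) := mul_nonneg (by linarith) (by linarith)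
        linarith [p1, p2]
    · linarith [p2]
  have key : |α - β| ≤ 32 * t^2 := by
    have hK2 : 1 ≤ K^2 := by
      calc (1:ℝ) = 1*1 := by ring
        _ ≤ K*K := mul_le_mul hK1 hK1 (by norm_num) (by linarith)
        _ = K^2 := by ring
    have := abstract α β (K^2) (t^2) hα0 hβ0 hβ2 hK2 hKt hαβ hβα
    linarith [this]
  have hgg : (Real.cosh u * Real.cosh v - Real.cosh w) / (Real.sinh u * Real.sinh v)
      - (u^2 + v^2 - w^2) / (2*u*v) = β - α := by
    linarith [hαval, hβval]
  rw [hgg, abs_sub_comm]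
  exact key

lemma abs_le_of_sq_le' {x c : ℝ} (hc : 0 ≤ c) (h : x^2 ≤ c^2) : |x| ≤ c := by
  rw [← Real.sqrt_sq_eq_abs]
  calc Real.sqrt (x^2) ≤ Real.sqrt (c^2) := Real.sqrt_le_sqrt h
    _ = c := Real.sqrt_sq hc

lemma ell_props (a b Φ : ℝ) (ha : 0 < a) (hb : 0 < b) (hcos0 : 0 ≤ Real.cos Φ) :
    Real.cosh (arcosh' (Real.cosh a * Real.cosh b + Real.sinh a * Real.sinh b * Real.cos Φ))
      = Real.cosh a * Real.cosh b + Real.sinh a * Real.sinh b * Real.cos Φ ∧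
    a < arcosh' (Real.cosh a * Real.cosh b + Real.sinh a * Real.sinh b * Real.cos Φ) ∧
    b < arcosh' (Real.cosh a * Real.cosh b + Real.sinh a * Real.sinh b * Real.cos Φ) ∧
    arcosh' (Real.cosh a * Real.cosh b + Real.sinh a * Real.sinh b * Real.cos Φ) ≤ a + b := by
  set c := Real.cosh a * Real.cosh b + Real.sinh a * Real.sinh b * Real.cos Φ with hcdef
  have hsa : 0 < Real.sinh a := Real.sinh_pos_iff.2 ha
  have hsb : 0 < Real.sinh b := Real.sinh_pos_iff.2 hb
  have hterm : 0 ≤ Real.sinh a * Real.sinh b * Real.cos Φ :=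
    mul_nonneg (mul_nonneg hsa.le hsb.le) hcos0
  have hca : 1 < Real.cosh a := Real.one_lt_cosh.2 ha.ne'
  have hcb : 1 < Real.cosh b := Real.one_lt_cosh.2 hb.ne'
  have hcapos : 0 < Real.cosh a := by linarith
  have hprod_a : Real.cosh a * 1 < Real.cosh a * Real.cosh b :=
    mul_lt_mul_of_pos_left hcb hcapos
  have hprod_b : 1 * Real.cosh b < Real.cosh a * Real.cosh b :=
    mul_lt_mul_of_pos_right hca (by linarith)
  have hc1 : 1 < c := by rw [hcdef]; nlinarith
  have hcosh : Real.cosh (arcosh' c) = c := _root_.cosh_arcosh hc1.le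
  have hl0 : 0 ≤ arcosh' c := _root_.arcosh_nonneg hc1.le
  refine ⟨hcosh, ?_, ?_, ?_⟩
  · have h1 : Real.cosh a < Real.cosh (arcosh' c) := by
      rw [hcosh, hcdef]; linarith
    have h2 := Real.cosh_lt_cosh.1 h1
    rw [abs_of_pos ha, abs_of_nonneg hl0] at h2
    exact h2
  · have h1 : Real.cosh b < Real.cosh (arcosh' c) := by
      rw [hcosh, hcdef]; linarith
    have h2 := Real.cosh_lt_cosh.1 h1
    rw [abs_of_pos hb, abs_of_nonneg hl0] at h2
    exact h2
  · have h1 : Real.cosh (arcosh' c) ≤ Real.cosh (a + b) := by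
      rw [hcosh, Real.cosh_add, hcdef]
      have : Real.sinh a * Real.sinh b * Real.cos Φ ≤ Real.sinh a * Real.sinh b * 1 :=
        mul_le_mul_of_nonneg_left (Real.cos_le_one Φ) (mul_nonneg hsa.le hsb.le)
      linarith
    have h2 := Real.cosh_le_cosh.1 h1
    rw [abs_of_nonneg hl0, abs_of_nonneg (by linarith : (0:ℝ) ≤ a + b)] at h2
    exact h2

end Helpers

/-- Degeneration limit (1) in the proof of Proposition 4.1 (hyperbolic background
geometry): as all three radii shrink to zero, the hyperbolic triangle shrinks to a
point, becomes asymptotically Euclidean, and its angle sum `θ₁ + θ₂ + θ₃` converges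
to `π`. -/
theorem hyperbolic_angle_sum_limit
    (Φ₁ Φ₂ Φ₃ : ℝ)
    (hΦ₁ : Φ₁ ∈ Set.Icc 0 (π / 2)) (hΦ₂ : Φ₂ ∈ Set.Icc 0 (π / 2))
    (hΦ₃ : Φ₃ ∈ Set.Icc 0 (π / 2)) :
    Filter.Tendsto
      (fun p : ℝ × ℝ × ℝ =>
        let r₁ := p.1
        let r₂ := p.2.1
        let r₃ := p.2.2
        let ℓ₁ := arcosh' (Real.cosh r₂ * Real.cosh r₃ +
          Real.sinh r₂ * Real.sinh r₃ * Real.cos Φ₁)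
        let ℓ₂ := arcosh' (Real.cosh r₃ * Real.cosh r₁ +
          Real.sinh r₃ * Real.sinh r₁ * Real.cos Φ₂)
        let ℓ₃ := arcosh' (Real.cosh r₁ * Real.cosh r₂ +
          Real.sinh r₁ * Real.sinh r₂ * Real.cos Φ₃)
        Real.arccos ((Real.cosh ℓ₂ * Real.cosh ℓ₃ - Real.cosh ℓ₁) /
            (Real.sinh ℓ₂ * Real.sinh ℓ₃)) +
          Real.arccos ((Real.cosh ℓ₃ * Real.cosh ℓ₁ - Real.cosh ℓ₂) /
            (Real.sinh ℓ₃ * Real.sinh ℓ₁)) +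
          Real.arccos ((Real.cosh ℓ₁ * Real.cosh ℓ₂ - Real.cosh ℓ₃) /
            (Real.sinh ℓ₁ * Real.sinh ℓ₂)))
      (nhdsWithin (0, 0, 0)
        (Set.Ioi (0 : ℝ) ×ˢ Set.Ioi (0 : ℝ) ×ˢ Set.Ioi (0 : ℝ))) (nhds π) := by
  have hπ0 : 0 < π := Real.pi_pos
  have hπ4 : π ≤ 4 := Real.pi_le_four
  have hcos₁ : 0 ≤ Real.cos Φ₁ :=
    Real.cos_nonneg_of_mem_Icc ⟨by linarith [hΦ₁.1], hΦ₁.2⟩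
  have hcos₂ : 0 ≤ Real.cos Φ₂ :=
    Real.cos_nonneg_of_mem_Icc ⟨by linarith [hΦ₂.1], hΦ₂.2⟩
  have hcos₃ : 0 ≤ Real.cos Φ₃ :=
    Real.cos_nonneg_of_mem_Icc ⟨by linarith [hΦ₃.1], hΦ₃.2⟩
  rw [Metric.tendsto_nhdsWithin_nhds]
  intro ε hε
  refine ⟨min (1/2) (ε/50), lt_min (by norm_num) (by positivity), ?_⟩
  set δ : ℝ := min (1/2) (ε/50) with hδdef
  have hδhalf : δ ≤ 1/2 := min_le_left _ _
  have hδε : δ ≤ ε/50 := min_le_right _ _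
  have hδ0 : 0 < δ := lt_min (by norm_num) (by positivity)
  rintro ⟨r₁, r₂, r₃⟩ hmem hdist
  simp only [Set.mem_prod, Set.mem_Ioi] at hmem
  obtain ⟨hr₁, hr₂, hr₃⟩ := hmem
  rw [Prod.dist_eq] at hdist
  rw [Prod.dist_eq] at hdist
  simp only [Real.dist_eq, sub_zero, max_lt_iff] at hdist
  obtain ⟨hd₁, hd₂, hd₃⟩ := hdist
  have hr₁δ : r₁ < δ := (le_abs_self r₁).trans_lt hd₁
  have hr₂δ : r₂ < δ := (le_abs_self r₂).trans_lt hd₂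
  have hr₃δ : r₃ < δ := (le_abs_self r₃).trans_lt hd₃
  dsimp only
  set ℓ₁ : ℝ := arcosh' (Real.cosh r₂ * Real.cosh r₃ + Real.sinh r₂ * Real.sinh r₃ * Real.cos Φ₁)
    with hℓ₁def
  set ℓ₂ : ℝ := arcosh' (Real.cosh r₃ * Real.cosh r₁ + Real.sinh r₃ * Real.sinh r₁ * Real.cos Φ₂)
    with hℓ₂def
  set ℓ₃ : ℝ := arcosh' (Real.cosh r₁ * Real.cosh r₂ + Real.sinh r₁ * Real.sinh r₂ * Real.cos Φ₃)
    with hℓ₃def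
  obtain ⟨hcosh₁, h23, h32, hsum₁⟩ := ell_props r₂ r₃ Φ₁ hr₂ hr₃ hcos₁
  obtain ⟨hcosh₂, h31, h13, hsum₂⟩ := ell_props r₃ r₁ Φ₂ hr₃ hr₁ hcos₂
  obtain ⟨hcosh₃, h12, h21, hsum₃⟩ := ell_props r₁ r₂ Φ₃ hr₁ hr₂ hcos₃
  rw [← hℓ₁def] at hcosh₁ h23 h32 hsum₁
  rw [← hℓ₂def] at hcosh₂ h31 h13 hsum₂
  rw [← hℓ₃def] at hcosh₃ h12 h21 hsum₃
  -- here h23 : r₂ < ℓ₁, h32 : r₃ < ℓ₁, h31 : r₃ < ℓ₂, h13 : r₁ < ℓ₂, h12 : r₁ < ℓ₃, h21 : r₂ < ℓ₃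
  have hl₁0 : 0 < ℓ₁ := hr₂.trans h23
  have hl₂0 : 0 < ℓ₂ := hr₃.trans h31
  have hl₃0 : 0 < ℓ₃ := hr₁.trans h12
  have hl₁2δ : ℓ₁ ≤ 2*δ := by linarith
  have hl₂2δ : ℓ₂ ≤ 2*δ := by linarith
  have hl₃2δ : ℓ₃ ≤ 2*δ := by linarith
  have hT₁ : ℓ₁ < ℓ₂ + ℓ₃ := by linarith
  have hT₂ : ℓ₂ < ℓ₃ + ℓ₁ := by linarith
  have hT₃ : ℓ₃ < ℓ₁ + ℓ₂ := by linarith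
  obtain ⟨hA₁, hg₁mem, hG₁mem⟩ :=
    angle_compare hl₂0 hl₃0 hl₁0 hT₂ (by linarith) (by linarith) hl₂2δ hl₃2δ hl₁2δ hδhalf
  obtain ⟨hA₂, hg₂mem, hG₂mem⟩ :=
    angle_compare hl₃0 hl₁0 hl₂0 hT₃ (by linarith) (by linarith) hl₃2δ hl₁2δ hl₂2δ hδhalf
  obtain ⟨hA₃, hg₃mem, hG₃mem⟩ :=
    angle_compare hl₁0 hl₂0 hl₃0 hT₁ (by linarith) (by linarith) hl₁2δ hl₂2δ hl₃2δ hδhalf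
  have heu := euclid_angle_sum hl₁0 hl₂0 hl₃0 hT₁ (by linarith) (by linarith)
  -- per-angle bounds
  have hπsq : π^2/2 ≤ 8 := by nlinarith
  have bound : ∀ g G : ℝ, g ∈ Set.Icc (-1:ℝ) 1 → G ∈ Set.Icc (-1:ℝ) 1 →
      |g - G| ≤ 32*δ^2 → |Real.arccos g - Real.arccos G| ≤ 16*δ := by
    intro g G hg hG hgG
    apply abs_le_of_sq_le' (by positivity)
    have h1 := arccos_sq_diff hg.1 hg.2 hG.1 hG.2
    have h2 : π^2/2 * |g - G| ≤ 8 * (32*δ^2) := by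
      have := mul_le_mul hπsq hgG (abs_nonneg _) (by norm_num)
      linarith
    have h3 : (16*δ)^2 = 8 * (32*δ^2) := by ring
    linarith
  have hB₁ := bound _ _ hg₁mem hG₁mem hA₁
  have hB₂ := bound _ _ hg₂mem hG₂mem hA₂
  have hB₃ := bound _ _ hg₃mem hG₃mem hA₃
  rw [Real.dist_eq]
  have final : ∀ x1 x2 x3 y1 y2 y3 : ℝ, |x1-y1| ≤ 16*δ → |x2-y2| ≤ 16*δ → |x3-y3| ≤ 16*δ →
      y1+y2+y3 = π → |x1+x2+x3-π| < ε := by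
    intro x1 x2 x3 y1 y2 y3 a1 a2 a3 hy
    have e : x1+x2+x3-π = (x1-y1) + ((x2-y2) + (x3-y3)) := by linarith
    rw [e]
    calc |(x1-y1) + ((x2-y2)+(x3-y3))| ≤ |x1-y1| + |(x2-y2)+(x3-y3)| := abs_add_le _ _
      _ ≤ |x1-y1| + (|x2-y2| + |x3-y3|) := by linarith [abs_add_le (x2-y2) (x3-y3)]
      _ ≤ 48*δ := by linarith
      _ < ε := by linarith
  exact final _ _ _ _ _ _ hB₁ hB₂ hB₃ heu
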